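/- Let M be a category admitting finite products, regarded as a cartesian symmetric monoidal category. Then the induced symmetric monoidal structure on the category Algbrd(M) of M-algebroids is cartesian: the unit algebroid is terminal, and for algebroids A, B the projections exhibit A ⊗ B as the categorical product A × B. -/

import Mathlib

open CategoryTheory CategoryTheory.Limits CategoryTheory.MonoidalCategory

universe v u w s

attribute [local instance] CategoryTheory.CartesianMonoidalCategory.ofHasFiniteProducts

open CartesianMonoidalCategory

noncomputable section Aux

variable {M : Type u} [Category.{v} M] [HasFiniteProducts M]

theorem stmt16.efext {C : Type*} {D : Type*} [EnrichedCategory M C] [EnrichedCategory M D]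
    {F G : EnrichedFunctor M C D} (ho : F.obj = G.obj) (hm : HEq F.map G.map) : F = G := by
  cases F; cases G
  cases ho; cases hm; rfl

theorem stmt16.map_eq {C : Type*} {D : Type*} [EnrichedCategory M C] [EnrichedCategory M D]
    {F G : EnrichedFunctor M C D} (h : F = G) (x y : C) :
    F.map x y = G.map x y ≫ eqToHom (by rw [h]) := by subst h; simp

def stmt16.unitEC : EnrichedCategory M PUnit.{s+1} where
  Hom _ _ := 𝟙_ M
  id _ := 𝟙 _
  comp _ _ _ := (λ_ _).hom
  id_comp _ _ := toUnit_unique _ _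
  comp_id _ _ := toUnit_unique _ _
  assoc _ _ _ _ := toUnit_unique _ _

attribute [local instance] stmt16.unitEC

def stmt16.toUnit (Z : Type w) [EnrichedCategory M Z] :
    EnrichedFunctor M Z PUnit.{s+1} where
  obj _ := PUnit.unit
  map _ _ := CartesianMonoidalCategory.toUnit _
  map_id _ := toUnit_unique _ _
  map_comp _ _ _ := toUnit_unique _ _


variable {M : Type u} [Category.{v} M] [HasFiniteProducts M]


variable {X : Type w} [A : EnrichedCategory M X]

theorem stmt16.aux1 {W : M} {a b : X} (g : W ⟶ (a ⟶[M] b)) :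
    (λ_ W).inv ≫ (eId M a ⊗ₘ g) ≫ eComp M a a b = g := by
  rw [tensorHom_def', Category.assoc, ← leftUnitor_inv_naturality_assoc, e_id_comp,
    Category.comp_id]

theorem stmt16.aux2 {W : M} {a b : X} (g : W ⟶ (a ⟶[M] b)) :
    (ρ_ W).inv ≫ (g ⊗ₘ eId M b) ≫ eComp M a b b = g := by
  rw [MonoidalCategory.tensorHom_def, Category.assoc, ← rightUnitor_inv_naturality_assoc, e_comp_id,
    Category.comp_id]

theorem stmt16.assoc_aux {W1 W2 W3 : M} {a b c d : X}
    (f1 : W1 ⟶ (a ⟶[M] b)) (f2 : W2 ⟶ (b ⟶[M] c)) (f3 : W3 ⟶ (c ⟶[M] d)) :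
    (α_ W1 W2 W3).inv ≫
        (((f1 ⊗ₘ f2) ≫ eComp M a b c) ⊗ₘ f3) ≫ eComp M a c d =
      (f1 ⊗ₘ ((f2 ⊗ₘ f3) ≫ eComp M b c d)) ≫ eComp M a b d := by
  rw [show ((f1 ⊗ₘ f2) ≫ eComp M a b c) ⊗ₘ f3 =
      ((f1 ⊗ₘ f2) ⊗ₘ f3) ≫ (eComp M a b c ⊗ₘ 𝟙 _) by
        rw [tensorHom_comp_tensorHom, Category.comp_id],
    show f1 ⊗ₘ ((f2 ⊗ₘ f3) ≫ eComp M b c d) =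
      (f1 ⊗ₘ (f2 ⊗ₘ f3)) ≫ (𝟙 _ ⊗ₘ eComp M b c d) by
        rw [tensorHom_comp_tensorHom, Category.comp_id]]
  simp only [Category.assoc]
  rw [← associator_inv_naturality_assoc, tensorHom_id, id_tensorHom, e_assoc]

variable {Y : Type w} [B : EnrichedCategory M Y]

def stmt16.prodEC : EnrichedCategory M (X × Y) where
  Hom p q := (p.1 ⟶[M] q.1) ⊗ (p.2 ⟶[M] q.2)
  id p := lift (eId M p.1) (eId M p.2)
  comp p q r := lift
    ((fst (p.1 ⟶[M] q.1) (p.2 ⟶[M] q.2) ⊗ₘ fst (q.1 ⟶[M] r.1) (q.2 ⟶[M] r.2)) ≫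
      eComp M p.1 q.1 r.1)
    ((snd (p.1 ⟶[M] q.1) (p.2 ⟶[M] q.2) ⊗ₘ snd (q.1 ⟶[M] r.1) (q.2 ⟶[M] r.2)) ≫
      eComp M p.2 q.2 r.2)
  id_comp p q := by
    apply CartesianMonoidalCategory.hom_ext <;>
      simp only [Category.assoc, Category.id_comp, lift_fst, lift_snd, ← tensorHom_id,
        tensorHom_comp_tensorHom_assoc, stmt16.aux1]
  comp_id p q := by
    apply CartesianMonoidalCategory.hom_ext <;>
      simp only [Category.assoc, Category.id_comp, lift_fst, lift_snd, ← id_tensorHom,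
        tensorHom_comp_tensorHom_assoc, stmt16.aux2]
  assoc p q r s := by
    have h1 := stmt16.assoc_aux (M := M) (a := p.1) (b := q.1) (c := r.1) (d := s.1)
      (fst (p.1 ⟶[M] q.1) (p.2 ⟶[M] q.2))
      (fst (q.1 ⟶[M] r.1) (q.2 ⟶[M] r.2))
      (fst (r.1 ⟶[M] s.1) (r.2 ⟶[M] s.2))
    have h2 := stmt16.assoc_aux (M := M) (a := p.2) (b := q.2) (c := r.2) (d := s.2)
      (snd (p.1 ⟶[M] q.1) (p.2 ⟶[M] q.2))
      (snd (q.1 ⟶[M] r.1) (q.2 ⟶[M] r.2))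
      (snd (r.1 ⟶[M] s.1) (r.2 ⟶[M] s.2))
    apply CartesianMonoidalCategory.hom_ext
    · simp only [Category.assoc, Category.id_comp, lift_fst, ← tensorHom_id, ← id_tensorHom,
        tensorHom_comp_tensorHom_assoc]
      exact h1
    · simp only [Category.assoc, Category.id_comp, lift_snd, ← tensorHom_id, ← id_tensorHom,
        tensorHom_comp_tensorHom_assoc]
      exact h2


attribute [reducible] stmt16.prodEC

attribute [local instance] stmt16.prodEC

theorem stmt16.prodEC_id (p : X × Y) :
    eId M p = lift (eId M p.1) (eId M p.2) := rfl

theorem stmt16.prodEC_comp (p q r : X × Y) :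
    eComp M p q r = lift
    ((fst (p.1 ⟶[M] q.1) (p.2 ⟶[M] q.2) ⊗ₘ fst (q.1 ⟶[M] r.1) (q.2 ⟶[M] r.2)) ≫
      eComp M p.1 q.1 r.1)
    ((snd (p.1 ⟶[M] q.1) (p.2 ⟶[M] q.2) ⊗ₘ snd (q.1 ⟶[M] r.1) (q.2 ⟶[M] r.2)) ≫
      eComp M p.2 q.2 r.2) := rfl

/-- Projection to the first factor. -/
def stmt16.pXF : EnrichedFunctor M (X × Y) X where
  obj p := p.1
  map p q := fst _ _
  map_id p := by simp [stmt16.prodEC_id]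
  map_comp p q r := by
    simp [stmt16.prodEC_comp]

/-- Projection to the second factor. -/
def stmt16.pYF : EnrichedFunctor M (X × Y) Y where
  obj p := p.2
  map p q := snd _ _
  map_id p := by simp [stmt16.prodEC_id]
  map_comp p q r := by
    simp [stmt16.prodEC_comp]

/-- Pairing of enriched functors. -/
def stmt16.pair {Z : Type w} [EnrichedCategory M Z]
    (F : EnrichedFunctor M Z X) (G : EnrichedFunctor M Z Y) :
    EnrichedFunctor M Z (X × Y) where
  obj z := (F.obj z, G.obj z)
  map z w := lift (F.map z w) (G.map z w)
  map_id z := by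
    apply CartesianMonoidalCategory.hom_ext
    · rw [Category.assoc, lift_fst, stmt16.prodEC_id, lift_fst]; exact F.map_id z
    · rw [Category.assoc, lift_snd, stmt16.prodEC_id, lift_snd]; exact G.map_id z
  map_comp z w t := by
    apply CartesianMonoidalCategory.hom_ext
    · rw [Category.assoc, lift_fst, stmt16.prodEC_comp, Category.assoc, lift_fst,
        tensorHom_comp_tensorHom_assoc, lift_fst, lift_fst]
      exact F.map_comp z w t
    · rw [Category.assoc, lift_snd, stmt16.prodEC_comp, Category.assoc, lift_snd,
        tensorHom_comp_tensorHom_assoc, lift_snd, lift_snd]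
      exact G.map_comp z w t

end Aux

/-- Let `M` be a category admitting finite products, regarded as a cartesian
symmetric monoidal category.  Then the induced symmetric monoidal structure on
the category `Algbrd(M)` of `M`-algebroids is cartesian:

* the unit algebroid (the unit algebra on one object) is terminal: every
  `M`-algebroid admits a unique `M`-functor to it; and
* for `M`-algebroids `A, B` (with object types `X, Y`), the tensor product
  `A ⊗ B` — the algebroid with objects `X × Y` and Hom-objects
  `(A ⊗ B)((x',y'),(x,y)) = A(x',x) ⊗ B(y',y)` — together with the projection
  `M`-functors to `A` and `B`, is the categorical product of `A` and `B`. -/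
theorem stmt16 {M : Type u} [Category.{v} M] [HasFiniteProducts M]
    {X Y : Type w} [A : EnrichedCategory M X] [B : EnrichedCategory M Y] :
    (∃ instU : EnrichedCategory M PUnit,
      (∀ a b : PUnit, @EnrichedCategory.Hom M _ _ PUnit instU a b = 𝟙_ M) ∧
      ∀ (Z : Type w) (instZ : EnrichedCategory M Z),
        ∃! _F : @EnrichedFunctor M _ _ Z instZ PUnit instU, True) ∧
    (∃ (instP : EnrichedCategory M (X × Y))
       (pX : @EnrichedFunctor M _ _ (X × Y) instP X A)
       (pY : @EnrichedFunctor M _ _ (X × Y) instP Y B),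
      (∀ p q : X × Y,
        @EnrichedCategory.Hom M _ _ (X × Y) instP p q =
          (p.1 ⟶[M] q.1) ⊗ (p.2 ⟶[M] q.2)) ∧
      ∀ (Z : Type w) (instZ : EnrichedCategory M Z)
        (F : @EnrichedFunctor M _ _ Z instZ X A) (G : @EnrichedFunctor M _ _ Z instZ Y B),
        ∃! H : @EnrichedFunctor M _ _ Z instZ (X × Y) instP,
          @EnrichedFunctor.comp M _ _ Z (X × Y) X instZ instP A H pX = F ∧
          @EnrichedFunctor.comp M _ _ Z (X × Y) Y instZ instP B H pY = G) := by
  constructor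
  · refine ⟨stmt16.unitEC, fun a b => rfl, fun Z instZ => ?_⟩
    letI := instZ
    letI : EnrichedCategory M PUnit := stmt16.unitEC
    refine ⟨stmt16.toUnit Z, trivial, fun F _ => ?_⟩
    apply stmt16.efext
    · funext z; exact Subsingleton.elim _ _
    · apply heq_of_eq
      funext z w
      exact toUnit_unique _ _
  · refine ⟨stmt16.prodEC, stmt16.pXF, stmt16.pYF, fun p q => rfl,
      fun Z instZ F G => ?_⟩
    letI := instZ
    letI : EnrichedCategory M (X × Y) := stmt16.prodEC
    refine ⟨stmt16.pair F G, ⟨?_, ?_⟩, ?_⟩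
    · apply stmt16.efext
      · rfl
      · apply heq_of_eq
        funext z w
        simp [stmt16.pair, stmt16.pXF, EnrichedFunctor.comp]
    · apply stmt16.efext
      · rfl
      · apply heq_of_eq
        funext z w
        simp [stmt16.pair, stmt16.pYF, EnrichedFunctor.comp]
    · rintro ⟨Ho, Hm, hi, hc⟩ ⟨hX, hY⟩
      have ho : Ho = fun z => (F.obj z, G.obj z) := by
        funext z
        exact Prod.ext (congrArg (fun K => EnrichedFunctor.obj K z) hX)
          (congrArg (fun K => EnrichedFunctor.obj K z) hY)
      subst ho
      apply stmt16.efext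
      · rfl
      · apply heq_of_eq
        funext z w
        apply CartesianMonoidalCategory.hom_ext
        · have h := stmt16.map_eq hX z w
          simp [EnrichedFunctor.comp, stmt16.pXF, stmt16.pair] at h
          exact h.trans (lift_fst _ _).symm
        · have h := stmt16.map_eq hY z w
          simp [EnrichedFunctor.comp, stmt16.pYF, stmt16.pair] at h
          exact h.trans (lift_snd _ _).symm
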